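/- Let 0 < σ₁ < σ₂, N ≥ 2, and let f_j (j=1,2) be C² solutions of f_j'' + ((N-1)/r) f_j' - (1/σ_j) f_j = 0 on (0,∞). Suppose f₁(ρ) = f₂(ρ) and σ₁ f₁'(ρ) = σ₂ f₂'(ρ) > 0 for some ρ > 0. If there exists s ∈ (0,ρ) with f₁(s) = f₂(s) and f₁(r) < f₂(r) for all r ∈ (s,ρ), then f₁'(s) < 0 and f₂'(s) < 0. -/

import Mathlib

open Set

theorem stmt_5 (σ₁ σ₂ : ℝ) (hσ₁ : 0 < σ₁) (hσ₁₂ : σ₁ < σ₂) (N : ℕ) (hN : 2 ≤ N)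
    (f₁ f₂ : ℝ → ℝ)
    (hreg₁ : ContDiffOn ℝ 2 f₁ (Set.Ioi 0)) (hreg₂ : ContDiffOn ℝ 2 f₂ (Set.Ioi 0))
    (hode₁ : ∀ r ∈ Set.Ioi (0 : ℝ),
      deriv (deriv f₁) r + ((N : ℝ) - 1) / r * deriv f₁ r - (1 / σ₁) * f₁ r = 0)
    (hode₂ : ∀ r ∈ Set.Ioi (0 : ℝ),
      deriv (deriv f₂) r + ((N : ℝ) - 1) / r * deriv f₂ r - (1 / σ₂) * f₂ r = 0)
    (ρ : ℝ) (hρ : 0 < ρ)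
    (hval : f₁ ρ = f₂ ρ)
    (hder : σ₁ * deriv f₁ ρ = σ₂ * deriv f₂ ρ) (hpos : 0 < σ₂ * deriv f₂ ρ)
    (s : ℝ) (hs : s ∈ Set.Ioo 0 ρ)
    (hvs : f₁ s = f₂ s) (hlt : ∀ r ∈ Set.Ioo s ρ, f₁ r < f₂ r) :
    deriv f₁ s < 0 ∧ deriv f₂ s < 0 := by
  have hσ₂ : 0 < σ₂ := lt_trans hσ₁ hσ₁₂
  have hs0 : 0 < s := hs.1
  have hsρ : s < ρ := hs.2
  -- differentiability facts
  have hdf₁ : ∀ r ∈ Set.Ioi (0:ℝ), HasDerivAt f₁ (deriv f₁ r) r := fun r hr =>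
    (((hreg₁.differentiableOn (by norm_num)).differentiableAt
      (isOpen_Ioi.mem_nhds hr))).hasDerivAt
  have hdf₂ : ∀ r ∈ Set.Ioi (0:ℝ), HasDerivAt f₂ (deriv f₂ r) r := fun r hr =>
    (((hreg₂.differentiableOn (by norm_num)).differentiableAt
      (isOpen_Ioi.mem_nhds hr))).hasDerivAt
  have hcd₁ : ContDiffOn ℝ 1 (deriv f₁) (Set.Ioi 0) :=
    hreg₁.deriv_of_isOpen isOpen_Ioi (by norm_num)
  have hcd₂ : ContDiffOn ℝ 1 (deriv f₂) (Set.Ioi 0) :=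
    hreg₂.deriv_of_isOpen isOpen_Ioi (by norm_num)
  have hddf₁ : ∀ r ∈ Set.Ioi (0:ℝ), HasDerivAt (deriv f₁) (deriv (deriv f₁) r) r := fun r hr =>
    ((hcd₁.differentiableOn (by norm_num)).differentiableAt (isOpen_Ioi.mem_nhds hr)).hasDerivAt
  have hddf₂ : ∀ r ∈ Set.Ioi (0:ℝ), HasDerivAt (deriv f₂) (deriv (deriv f₂) r) r := fun r hr =>
    ((hcd₂.differentiableOn (by norm_num)).differentiableAt (isOpen_Ioi.mem_nhds hr)).hasDerivAt
  -- Step 1: deriv f₁ s ≤ deriv f₂ s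
  set g : ℝ → ℝ := fun r => f₂ r - f₁ r with hg
  have hgd : HasDerivAt g (deriv f₂ s - deriv f₁ s) s :=
    (hdf₂ s hs0).sub (hdf₁ s hs0)
  have hslope : Filter.Tendsto (slope g s) (nhdsWithin s (Set.Ioi s))
      (nhds (deriv f₂ s - deriv f₁ s)) := by
    have := hasDerivAt_iff_tendsto_slope.mp hgd
    exact this.mono_left (nhdsWithin_mono s fun x hx => ne_of_gt hx)
  have hstep1 : 0 ≤ deriv f₂ s - deriv f₁ s := by
    refine ge_of_tendsto hslope ?_
    have hmem : Set.Ioo s ρ ∈ nhdsWithin s (Set.Ioi s) := by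
      rw [← Set.Ioi_inter_Iio]
      exact Filter.inter_mem self_mem_nhdsWithin
        (mem_nhdsWithin_of_mem_nhds (Iio_mem_nhds hsρ))
    filter_upwards [hmem] with r hr
    have hgr : 0 < g r := sub_pos.mpr (hlt r hr)
    have hgs : g s = 0 := by simp [hg, hvs]
    rw [slope_def_field, hgs, sub_zero]
    exact div_nonneg hgr.le (by linarith [hr.1])
  -- Step 2: the Wronskian-type function
  set W : ℝ → ℝ := fun r => r ^ (N - 1) * (σ₁ * deriv f₁ r - σ₂ * deriv f₂ r) with hW
  have hNcast : ((N - 1 : ℕ) : ℝ) = (N : ℝ) - 1 := by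
    have : 1 ≤ N := by omega
    push_cast [Nat.cast_sub this]; ring
  have hWderiv : ∀ r ∈ Set.Ioi (0:ℝ), HasDerivAt W (r ^ (N - 1) * (f₁ r - f₂ r)) r := by
    intro r hr
    have hr0 : (0:ℝ) < r := hr
    have h1 : HasDerivAt (fun x : ℝ => x ^ (N - 1))
        ((N - 1 : ℕ) * r ^ (N - 1 - 1)) r := hasDerivAt_pow (N - 1) r
    have h2 : HasDerivAt (fun x => σ₁ * deriv f₁ x - σ₂ * deriv f₂ x)
        (σ₁ * deriv (deriv f₁) r - σ₂ * deriv (deriv f₂) r) r :=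
      ((hddf₁ r hr).const_mul σ₁).sub ((hddf₂ r hr).const_mul σ₂)
    have := h1.mul h2
    refine this.congr_deriv ?_
    have e₁ := hode₁ r hr
    have e₂ := hode₂ r hr
    have hdd₁ : deriv (deriv f₁) r = (1 / σ₁) * f₁ r - ((N : ℝ) - 1) / r * deriv f₁ r := by
      linarith
    have hdd₂ : deriv (deriv f₂) r = (1 / σ₂) * f₂ r - ((N : ℝ) - 1) / r * deriv f₂ r := by
      linarith
    have hpow : r ^ (N - 1) = r ^ (N - 2) * r := by
      rw [← pow_succ]
      congr 1
      omega
    have hpow2 : N - 1 - 1 = N - 2 := by omega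
    rw [hdd₁, hdd₂, hpow, hpow2, hNcast]
    field_simp
    ring
  -- W strict anti on [s, ρ]
  have hIcc : Set.Icc s ρ ⊆ Set.Ioi (0:ℝ) := fun x hx => lt_of_lt_of_le hs0 hx.1
  have hWcont : ContinuousOn W (Set.Icc s ρ) := by
    apply ContinuousOn.mono _ hIcc
    exact (continuousOn_pow _).mul
      (((hcd₁.continuousOn.const_smul σ₁).sub (hcd₂.continuousOn.const_smul σ₂)))
  have hanti : StrictAntiOn W (Set.Icc s ρ) := by
    apply strictAntiOn_of_deriv_neg (convex_Icc s ρ) hWcont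
    intro x hx
    rw [interior_Icc] at hx
    have hx0 : (0:ℝ) < x := lt_trans hs0 hx.1
    rw [(hWderiv x hx0).deriv]
    have := hlt x hx
    have : f₁ x - f₂ x < 0 := by linarith
    have hxpow : 0 < x ^ (N - 1) := pow_pos hx0 _
    nlinarith
  have hWρ : W ρ = 0 := by
    simp [hW, hder]
  have hWs : 0 < W s := by
    have := hanti (Set.left_mem_Icc.mpr hsρ.le) (Set.right_mem_Icc.mpr hsρ.le) hsρ
    rw [hWρ] at this
    linarith
  have hspow : 0 < s ^ (N - 1) := pow_pos hs0 _
  have hkey : σ₂ * deriv f₂ s < σ₁ * deriv f₁ s := by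
    by_contra h
    push_neg at h
    have : W s ≤ 0 := by
      apply mul_nonpos_of_nonneg_of_nonpos hspow.le
      linarith
    linarith
  constructor
  · nlinarith
  · nlinarith
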